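/- Let q be an odd prime power with q ≡ 3 (mod 4). With notation as for the conic {x_1^2 = x_0 x_2} in PG(2,q), the F_2-matrix M_1 with rows and columns indexed by external points and (P_i,P_j)-entry |N_E(P_i) ∩ N_E(P_j)| mod 2 satisfies M_1^2 = I. -/

import Mathlib

/-- The quadratic form `Q(x₀,x₁,x₂) = x₁² - x₀x₂` on `F³`. -/
def Qc (F : Type) [Field F] (v : Fin 3 → F) : F := v 1 ^ 2 - v 0 * v 2

/-- The bilinear form associated to `Qc`. -/
def Bc (F : Type) [Field F] (x y : Fin 3 → F) : F :=
  (2 : F)⁻¹ * (Qc F (x + y) - Qc F x - Qc F y)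

/-- A point of `PG(2,q)` is absolute if `Q` vanishes on it. -/
def Absolute (F : Type) [Field F] (P : Projectivization F (Fin 3 → F)) : Prop :=
  Qc F P.rep = 0

/-- A point of `PG(2,q)` is external if `Q` takes a nonzero square value on it. -/
def External (F : Type) [Field F] (P : Projectivization F (Fin 3 → F)) : Prop :=
  IsSquare (Qc F P.rep) ∧ Qc F P.rep ≠ 0

/-- A point of `PG(2,q)` is internal if `Q` takes a non-square value on it. -/
def Internal (F : Type) [Field F] (P : Projectivization F (Fin 3 → F)) : Prop :=
  ¬ IsSquare (Qc F P.rep)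

/-- Lines of `PG(2,q)` are the 2-dimensional subspaces of `F³`. -/
def IsLine (F : Type) [Field F] (L : Submodule F (Fin 3 → F)) : Prop :=
  Module.finrank F ↥L = 2

/-- The number of absolute points on a line. -/
noncomputable def nAbs (F : Type) [Field F] (L : Submodule F (Fin 3 → F)) : ℕ :=
  Nat.card {P : Projectivization F (Fin 3 → F) // Absolute F P ∧ P.submodule ≤ L}

open Classical in
/-- Indicator of a proposition in `F₂`. -/
noncomputable def ind (p : Prop) : ZMod 2 := if p then 1 else 0

/-- `NE F P` is the set of external points, other than `P`, lying on some secant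
(meeting the conic twice) or passant (missing the conic) line through `P`. -/
def NE (F : Type) [Field F] (P : Projectivization F (Fin 3 → F)) :
    Set (Projectivization F (Fin 3 → F)) :=
  {R | External F R ∧ R ≠ P ∧
    ∃ L : Submodule F (Fin 3 → F), IsLine F L ∧ P.submodule ≤ L ∧ R.submodule ≤ L ∧
      (nAbs F L = 0 ∨ nAbs F L = 2)}

/-- The matrix over `F₂` indexed by external points whose `(P,R)` entry is `1`
iff `R ∈ NE F P`. -/
noncomputable def M1 (F : Type) [Field F] :
    Matrix {P : Projectivization F (Fin 3 → F) // External F P}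
      {P : Projectivization F (Fin 3 → F) // External F P} (ZMod 2) :=
  Matrix.of fun P R => ind (R.1 ∈ NE F P.1)

namespace Aux
open Projectivization

variable {F : Type} [Field F]

def Bp (u v : Fin 3 → F) : F := 2 * u 1 * v 1 - u 0 * v 2 - u 2 * v 0

def Dq (u v : Fin 3 → F) : F := Bp u v ^ 2 - 4 * Qc F u * Qc F v

def wg (x y : Fin 2 → F) : F := x 0 * y 1 - x 1 * y 0

def wm (x y : Fin 2 → F) : Fin 3 → F := ![2 * x 0 * y 0, x 0 * y 1 + x 1 * y 0, 2 * x 1 * y 1]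

lemma Qc_smul (c : F) (v : Fin 3 → F) : Qc F (c • v) = c ^ 2 * Qc F v := by
  simp only [Qc, Pi.smul_apply, smul_eq_mul]; ring

lemma Dq_smul (c d : F) (u v : Fin 3 → F) : Dq (c • u) (d • v) = c ^ 2 * d ^ 2 * Dq u v := by
  simp only [Dq, Bp, Qc, Pi.smul_apply, smul_eq_mul]; ring

lemma Dq_self (u : Fin 3 → F) : Dq u u = 0 := by
  simp only [Dq, Bp, Qc]; ring

lemma Qc_wm (x y : Fin 2 → F) : Qc F (wm x y) = wg x y ^ 2 := by
  simp only [Qc, wm, wg, Matrix.cons_val_zero, Matrix.cons_val_one, Matrix.head_cons,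
    Matrix.cons_val_two, Matrix.tail_cons]; ring

lemma wm_comm (x y : Fin 2 → F) : wm x y = wm y x := by
  funext i; fin_cases i <;> simp [wm] <;> ring

lemma wm_smul_left (c : F) (x y : Fin 2 → F) : wm (c • x) y = c • wm x y := by
  funext i; fin_cases i <;> simp [wm] <;> ring

lemma wm_smul_right (c : F) (x y : Fin 2 → F) : wm x (c • y) = c • wm x y := by
  rw [wm_comm, wm_smul_left, wm_comm]

lemma Dq_wm (x y u v : Fin 2 → F) :
    Dq (wm x y) (wm u v) = 16 * (wg x u * wg x v * wg y u * wg y v) := by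
  simp only [Dq, Bp, Qc, wm, wg, Matrix.cons_val_zero, Matrix.cons_val_one, Matrix.head_cons,
    Matrix.cons_val_two, Matrix.tail_cons]; ring

def cn (x : Fin 2 → F) : Fin 3 → F := ![x 0 ^ 2, x 0 * x 1, x 1 ^ 2]

lemma Bp_wm_cn (x y z : Fin 2 → F) : Bp (wm x y) (cn z) = -2 * (wg x z * wg y z) := by
  simp only [Bp, wm, cn, wg, Matrix.cons_val_zero, Matrix.cons_val_one, Matrix.head_cons,
    Matrix.cons_val_two, Matrix.tail_cons]; ring

lemma Bp_smul_left (c : F) (u v : Fin 3 → F) : Bp (c • u) v = c * Bp u v := by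
  simp only [Bp, Pi.smul_apply, smul_eq_mul]; ring

lemma Bp_smul_right (c : F) (u v : Fin 3 → F) : Bp u (c • v) = c * Bp u v := by
  simp only [Bp, Pi.smul_apply, smul_eq_mul]; ring

section Char
variable [Fintype F] {q : ℕ} (hq : Fintype.card F = q) (hodd : Odd q)

include hq hodd in
lemma two_ne_zero'' : (2 : F) ≠ 0 := by
  have hchar : ringChar F ≠ 2 := by
    intro h2
    have := FiniteField.even_card_of_char_two h2
    rw [hq, Nat.odd_iff] at *
    omega
  intro h
  have h' : ((2 : ℕ) : F) = 0 := by exact_mod_cast h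
  have hdvd := (CharP.cast_eq_zero_iff F (ringChar F) 2).mp h'
  rcases (Nat.dvd_prime Nat.prime_two).mp hdvd with h1 | h1
  · exact CharP.ringChar_ne_one h1
  · exact hchar h1
end Char


lemma vec2_ne_zero {x : Fin 2 → F} (hx : x ≠ 0) : x 0 ≠ 0 ∨ x 1 ≠ 0 := by
  by_contra h
  push_neg at h
  exact hx (funext fun i => by fin_cases i <;> simp [h.1, h.2])

lemma wg_self (x : Fin 2 → F) : wg x x = 0 := by simp [wg]; ring

lemma wg_smul_left (c : F) (x y : Fin 2 → F) : wg (c • x) y = c * wg x y := by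
  simp [wg]; ring

lemma wg_smul_right (c : F) (x y : Fin 2 → F) : wg x (c • y) = c * wg x y := by
  simp [wg]; ring

lemma mk_smul_eq {V : Type} [AddCommGroup V] [Module F V] {c : F} {v : V}
    (hcv : c • v ≠ 0) (hv : v ≠ 0) :
    Projectivization.mk F (c • v) hcv = Projectivization.mk F v hv := by
  rw [mk_eq_mk_iff]
  have hc : c ≠ 0 := fun h => hcv (by simp [h])
  exact ⟨Units.mk0 c hc, rfl⟩

lemma mk_eq_mk_iff_wg {x y : Fin 2 → F} (hx : x ≠ 0) (hy : y ≠ 0) :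
    Projectivization.mk F x hx = Projectivization.mk F y hy ↔ wg x y = 0 := by
  rw [mk_eq_mk_iff]
  constructor
  · rintro ⟨a, rfl⟩
    rw [Units.smul_def, wg_smul_left, wg_self, mul_zero]
  · intro h
    have hwg : x 0 * y 1 = x 1 * y 0 := by
      simpa [wg, sub_eq_zero] using h
    rcases vec2_ne_zero hy with hy0 | hy1
    · have hx0 : x 0 ≠ 0 := by
        intro h0
        apply hx
        have h1 : x 1 = 0 := by
          have h' := hwg; rw [h0, zero_mul] at h'
          exact (mul_eq_zero.mp h'.symm).resolve_right hy0
        funext i; fin_cases i <;> simp [h0, h1]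
      refine ⟨Units.mk0 (x 0 / y 0) (div_ne_zero hx0 hy0), funext fun i => ?_⟩
      fin_cases i <;> simp [Units.smul_def] <;> field_simp
      linear_combination hwg
    · have hx1 : x 1 ≠ 0 := by
        intro h1
        apply hx
        have h0 : x 0 = 0 := by
          have h' := hwg; rw [h1, zero_mul] at h'
          exact (mul_eq_zero.mp h').resolve_right hy1
        funext i; fin_cases i <;> simp [h0, h1]
      refine ⟨Units.mk0 (x 1 / y 1) (div_ne_zero hx1 hy1), funext fun i => ?_⟩
      fin_cases i <;> simp [Units.smul_def] <;> field_simp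
      linear_combination -hwg

lemma isSquare_sq_mul_iff {a : F} (ha : a ≠ 0) (t : F) : IsSquare (a ^ 2 * t) ↔ IsSquare t := by
  constructor
  · rintro ⟨r, hr⟩
    refine ⟨r / a, ?_⟩
    field_simp
    linear_combination hr
  · rintro ⟨r, hr⟩
    exact ⟨a * r, by rw [hr]; ring⟩

lemma external_mk {v : Fin 3 → F} (hv : v ≠ 0) :
    External F (Projectivization.mk F v hv) ↔ (IsSquare (Qc F v) ∧ Qc F v ≠ 0) := by
  obtain ⟨a, ha⟩ := Projectivization.exists_smul_eq_mk_rep F v hv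
  unfold External
  rw [← ha, Units.smul_def, Qc_smul, isSquare_sq_mul_iff a.ne_zero]
  simp [mul_eq_zero, pow_eq_zero_iff, a.ne_zero]

lemma absolute_mk {v : Fin 3 → F} (hv : v ≠ 0) :
    Absolute F (Projectivization.mk F v hv) ↔ Qc F v = 0 := by
  obtain ⟨a, ha⟩ := Projectivization.exists_smul_eq_mk_rep F v hv
  unfold Absolute
  rw [← ha, Units.smul_def, Qc_smul]
  simp [mul_eq_zero, pow_eq_zero_iff, a.ne_zero]

lemma dq_rep_zero_iff {u v : Fin 3 → F} (hu : u ≠ 0) (hv : v ≠ 0) :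
    Dq (Projectivization.mk F u hu).rep (Projectivization.mk F v hv).rep = 0 ↔ Dq u v = 0 := by
  obtain ⟨a, ha⟩ := Projectivization.exists_smul_eq_mk_rep F u hu
  obtain ⟨b, hb⟩ := Projectivization.exists_smul_eq_mk_rep F v hv
  rw [← ha, ← hb, Units.smul_def, Units.smul_def, Dq_smul]
  simp [mul_eq_zero, pow_eq_zero_iff, a.ne_zero, b.ne_zero]

lemma indep_coeff {P S : Projectivization F (Fin 3 → F)} (h : P ≠ S) :
    ∀ a b : F, a • P.rep + b • S.rep = 0 → a = 0 ∧ b = 0 := by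
  intro a b hab
  by_cases hb : b = 0
  · subst hb
    rw [zero_smul, add_zero] at hab
    rcases smul_eq_zero.mp hab with h' | h'
    · exact ⟨h', rfl⟩
    · exact absurd h' (rep_nonzero P)
  · exfalso
    have h1 : b • S.rep = -(a • P.rep) := by
      rw [eq_neg_iff_add_eq_zero, add_comm]; exact hab
    have hs : S.rep = (-(a / b)) • P.rep := by
      calc S.rep = b⁻¹ • (b • S.rep) := by rw [smul_smul, inv_mul_cancel₀ hb, one_smul]
      _ = (-(a / b)) • P.rep := by
          rw [h1, smul_neg, smul_smul, ← neg_smul]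
          congr 1
          field_simp
    have hc : (-(a / b)) ≠ 0 := by
      intro h0
      rw [h0, zero_smul] at hs
      exact rep_nonzero S hs
    apply h
    have : Projectivization.mk F P.rep (rep_nonzero P) =
        Projectivization.mk F S.rep (rep_nonzero S) := by
      rw [mk_eq_mk_iff]
      refine ⟨(Units.mk0 _ hc)⁻¹, ?_⟩
      rw [Units.smul_def]
      rw [hs, smul_smul, Units.val_inv_eq_inv_val, Units.val_mk0, inv_mul_cancel₀ hc, one_smul]
    rwa [mk_rep, mk_rep] at this

lemma li_of_ne {P S : Projectivization F (Fin 3 → F)} (h : P ≠ S) :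
    LinearIndependent F ![P.rep, S.rep] :=
  LinearIndependent.pair_iff.mpr (indep_coeff h)

lemma finrank_span_pair {p s : Fin 3 → F} (h : LinearIndependent F ![p, s]) :
    Module.finrank F (Submodule.span F {p, s} : Submodule F (Fin 3 → F)) = 2 := by
  have hr : Set.range ![p, s] = {p, s} := by
    ext v
    simp [Fin.exists_fin_two, Set.mem_insert_iff, or_comm]
  have := finrank_span_eq_card (R := F) h
  rw [hr] at this
  simpa using this

lemma submodule_le_iff (X : Projectivization F (Fin 3 → F)) (L : Submodule F (Fin 3 → F)) :
    X.submodule ≤ L ↔ X.rep ∈ L := by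
  rw [Projectivization.submodule_eq, Submodule.span_singleton_le_iff_mem]

lemma qc_combo (t : F) (p s : Fin 3 → F) :
    Qc F (t • p + s) = Qc F p * t ^ 2 + Bp p s * t + Qc F s := by
  simp only [Qc, Bp, Pi.add_apply, Pi.smul_apply, smul_eq_mul]; ring

lemma nAbs_span {P S : Projectivization F (Fin 3 → F)} (h2 : (2 : F) ≠ 0)
    (hQp : Qc F P.rep ≠ 0) (hne : P ≠ S) :
    nAbs F (Submodule.span F {P.rep, S.rep}) = Nat.card {u : F // u ^ 2 = Dq P.rep S.rep} := by
  have hind := indep_coeff hne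
  set p := P.rep with hp
  set s := S.rep with hs'
  have hmem : ∀ t : F, t • p + s ∈ Submodule.span F {p, s} := by
    intro t
    refine Submodule.add_mem _ (Submodule.smul_mem _ _ ?_) ?_ <;>
      exact Submodule.subset_span (by simp)
  have hnz : ∀ t : F, t • p + s ≠ 0 := by
    intro t h
    have := (hind t 1 (by simpa using h)).2
    exact one_ne_zero this
  let f : {t : F // Qc F p * t ^ 2 + Bp p s * t + Qc F s = 0} →
      {X : Projectivization F (Fin 3 → F) // Absolute F X ∧ X.submodule ≤ Submodule.span F {p, s}} :=
    fun t => ⟨Projectivization.mk F (t.1 • p + s) (hnz t.1),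
      (absolute_mk _).mpr (by rw [qc_combo]; exact t.2),
      by rw [Projectivization.submodule_mk, Submodule.span_singleton_le_iff_mem]; exact hmem t.1⟩
  have hinj : Function.Injective f := by
    rintro ⟨t, ht⟩ ⟨t', ht'⟩ hff
    have := Subtype.ext_iff.mp hff
    simp only [f] at this
    rw [mk_eq_mk_iff] at this
    obtain ⟨a, ha⟩ := this
    rw [Units.smul_def] at ha
    have h0 : ((a : F) * t' - t) • p + ((a : F) - 1) • s = 0 := by
      have h' : ((a : F) • (t' • p + s)) - (t • p + s) = 0 := by rw [ha]; abel
      rw [smul_add] at h'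
      rw [sub_smul, sub_smul, one_smul, ← smul_smul, ← h']
      abel
    obtain ⟨h1, h2'⟩ := hind _ _ h0
    have ha1 : (a : F) = 1 := sub_eq_zero.mp h2'
    ext
    have h1' := sub_eq_zero.mp h1
    rw [ha1, one_mul] at h1'
    exact h1'.symm
  have hsurj : Function.Surjective f := by
    rintro ⟨X, habs, hle⟩
    rw [submodule_le_iff, Submodule.mem_span_pair] at hle
    obtain ⟨a, b, hab⟩ := hle
    have hQ : a ^ 2 * Qc F p + a * b * Bp p s + b ^ 2 * Qc F s = 0 := by
      have : Qc F (a • p + b • s) = 0 := by rw [hab]; exact habs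
      simp only [Qc, Bp, Pi.add_apply, Pi.smul_apply, smul_eq_mul] at this ⊢
      linear_combination this
    have hb : b ≠ 0 := by
      intro hb0
      subst hb0
      rw [zero_smul, add_zero] at hab
      have ha0 : a ≠ 0 := by
        intro ha0
        rw [ha0, zero_smul] at hab
        exact rep_nonzero X hab.symm
      have hQ0 : a ^ 2 * Qc F p = 0 := by linear_combination hQ
      rcases mul_eq_zero.mp hQ0 with h | h
      · exact pow_ne_zero 2 ha0 h
      · exact hQp h
    refine ⟨⟨a / b, ?_⟩, ?_⟩
    · field_simp
      linear_combination hQ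
    · apply Subtype.ext
      simp only [f]
      have hXrep : X.rep = b • ((a / b) • p + s) := by
        rw [smul_add, smul_smul, mul_div_cancel₀ _ hb]
        exact hab.symm
      have : Projectivization.mk F X.rep (rep_nonzero X) =
          Projectivization.mk F ((a / b) • p + s) (hnz _) := by
        rw [mk_eq_mk_iff]
        exact ⟨Units.mk0 b hb, hXrep.symm⟩
      rw [mk_rep] at this
      exact this.symm
  have hQp2 : 2 * Qc F p ≠ 0 := mul_ne_zero h2 hQp
  let g : {t : F // Qc F p * t ^ 2 + Bp p s * t + Qc F s = 0} ≃ {u : F // u ^ 2 = Dq p s} :=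
    { toFun := fun t => ⟨2 * Qc F p * t.1 + Bp p s, by
        have := t.2
        unfold Dq
        linear_combination 4 * Qc F p * this⟩
      invFun := fun u => ⟨(u.1 - Bp p s) / (2 * Qc F p), by
        have := u.2
        unfold Dq at this
        field_simp
        linear_combination this⟩
      left_inv := fun t => by
        ext
        field_simp
        ring
      right_inv := fun u => by
        ext
        field_simp
        ring }
  calc nAbs F (Submodule.span F {p, s})
      = Nat.card {t : F // Qc F p * t ^ 2 + Bp p s * t + Qc F s = 0} :=
        (Nat.card_congr (Equiv.ofBijective f ⟨hinj, hsurj⟩)).symm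
    _ = Nat.card {u : F // u ^ 2 = Dq p s} := Nat.card_congr g

lemma card_sq_zero : Nat.card {u : F // u ^ 2 = (0 : F)} = 1 := by
  have : ∀ u : F, u ^ 2 = 0 ↔ u = 0 := fun u => pow_eq_zero_iff two_ne_zero
  rw [Nat.card_congr (Equiv.subtypeEquivRight this)]
  haveI : Unique {u : F // u = 0} := ⟨⟨⟨0, rfl⟩⟩, by rintro ⟨u, rfl⟩; rfl⟩
  exact Nat.card_unique

lemma card_sq_ne (h2 : (2 : F) ≠ 0) {D : F} (hD : D ≠ 0) :
    Nat.card {u : F // u ^ 2 = D} = 0 ∨ Nat.card {u : F // u ^ 2 = D} = 2 := by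
  by_cases h : ∃ c : F, c ^ 2 = D
  · right
    obtain ⟨c, hc⟩ := h
    have hc0 : c ≠ 0 := by rintro rfl; rw [zero_pow two_ne_zero] at hc; exact hD hc.symm
    have hkey : ∀ u : F, u ^ 2 = D ↔ u = c ∨ u = -c := by
      intro u
      constructor
      · intro hu
        have : (u - c) * (u + c) = 0 := by linear_combination hu - hc
        rcases mul_eq_zero.mp this with h | h
        · left; exact sub_eq_zero.mp h
        · right; exact add_eq_zero_iff_eq_neg.mp h
      · rintro (rfl | rfl)
        · exact hc
        · rw [← hc]; ring
    rw [Nat.card_congr (Equiv.subtypeEquivRight hkey)]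
    have hne : c ≠ -c := by
      intro h
      apply hc0
      have : 2 * c = 0 := by linear_combination h
      rcases mul_eq_zero.mp this with h' | h'
      · exact absurd h' h2
      · exact h'
    have h2' : Nat.card {u : F // u = c ∨ u = -c} = Nat.card ({c, -c} : Set F) :=
      Nat.card_congr (Equiv.subtypeEquivRight (by intro u; simp [Set.mem_insert_iff]))
    rw [h2', Nat.card_coe_set_eq]
    exact Set.ncard_pair hne
  · left
    push_neg at h
    haveI : IsEmpty {u : F // u ^ 2 = D} := ⟨fun u => h u.1 u.2⟩
    exact Nat.card_of_isEmpty

lemma mem_NE_iff (h2 : (2 : F) ≠ 0) {P : Projectivization F (Fin 3 → F)} (hP : External F P)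
    (S : Projectivization F (Fin 3 → F)) :
    S ∈ NE F P ↔ External F S ∧ Dq P.rep S.rep ≠ 0 := by
  constructor
  · rintro ⟨hSext, hne, L, hL, hPL, hSL, hn⟩
    have hne' : P ≠ S := Ne.symm hne
    have hli := li_of_ne hne'
    have hspan_le : Submodule.span F {P.rep, S.rep} ≤ L := by
      rw [Submodule.span_le]
      rintro x hx
      simp only [Set.mem_insert_iff, Set.mem_singleton_iff] at hx
      rcases hx with rfl | rfl
      · exact (submodule_le_iff P L).mp hPL
      · exact (submodule_le_iff S L).mp hSL
    have heq : Submodule.span F {P.rep, S.rep} = L := by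
      apply Submodule.eq_of_le_of_finrank_eq hspan_le
      rw [finrank_span_pair hli, hL]
    rw [← heq, nAbs_span h2 hP.2 hne'] at hn
    refine ⟨hSext, fun hD0 => ?_⟩
    rw [hD0, card_sq_zero] at hn
    rcases hn with h | h <;> omega
  · rintro ⟨hSext, hD⟩
    have hne' : S ≠ P := by
      rintro rfl
      exact hD (Dq_self _)
    have hli := li_of_ne (Ne.symm hne')
    refine ⟨hSext, hne', Submodule.span F {P.rep, S.rep}, finrank_span_pair hli, ?_, ?_, ?_⟩
    · exact (submodule_le_iff P _).mpr (Submodule.subset_span (by simp))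
    · exact (submodule_le_iff S _).mpr (Submodule.subset_span (by simp))
    · rw [nAbs_span h2 hP.2 (Ne.symm hne')]
      exact card_sq_ne h2 hD

lemma Dq_comm (u v : Fin 3 → F) : Dq u v = Dq v u := by
  simp only [Dq, Bp, Qc]; ring

lemma eq_iff_wg (A B : Projectivization F (Fin 2 → F)) : A = B ↔ wg A.rep B.rep = 0 := by
  rw [← mk_eq_mk_iff_wg (rep_nonzero A) (rep_nonzero B), Projectivization.mk_rep,
    Projectivization.mk_rep]

lemma wg_rep_ne_zero {A B : Projectivization F (Fin 2 → F)} (h : A ≠ B) :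
    wg A.rep B.rep ≠ 0 := fun h0 => h ((eq_iff_wg A B).mpr h0)

lemma qc_zero : Qc F (0 : Fin 3 → F) = 0 := by simp [Qc]

lemma wm_ne_zero {x y : Fin 2 → F} (h : wg x y ≠ 0) : wm x y ≠ 0 := by
  intro h0
  apply h
  have hq := Qc_wm (F := F) x y
  rw [h0, qc_zero] at hq
  exact pow_eq_zero_iff two_ne_zero |>.mp hq.symm

lemma vec110_ne : (![1, 0, 0] : Fin 3 → F) ≠ 0 := by
  intro h
  have := congrFun h 0
  simp at this

open Classical in
/-- The pole of the pair of conic points with parameters `A`, `B`. -/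
noncomputable def gP (A B : Projectivization F (Fin 2 → F)) :
    Projectivization F (Fin 3 → F) :=
  if h : A = B then Projectivization.mk F ![1, 0, 0] vec110_ne
  else Projectivization.mk F (wm A.rep B.rep) (wm_ne_zero (wg_rep_ne_zero h))

lemma gP_comm (A B : Projectivization F (Fin 2 → F)) : gP A B = gP B A := by
  rcases eq_or_ne A B with rfl | h
  · rfl
  · rw [gP, gP, dif_neg h, dif_neg (Ne.symm h), mk_eq_mk_iff]
    refine ⟨1, ?_⟩
    rw [one_smul, wm_comm]

lemma gP_eq {A B : Projectivization F (Fin 2 → F)} (h : A ≠ B) {x y : Fin 2 → F}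
    (hx : x ≠ 0) (hy : y ≠ 0) (hA : Projectivization.mk F x hx = A)
    (hB : Projectivization.mk F y hy = B) (hwm : wm x y ≠ 0) :
    gP A B = Projectivization.mk F (wm x y) hwm := by
  subst hA hB
  rw [gP, dif_neg h, mk_eq_mk_iff]
  obtain ⟨a, ha⟩ := Projectivization.exists_smul_eq_mk_rep F x hx
  obtain ⟨b, hb⟩ := Projectivization.exists_smul_eq_mk_rep F y hy
  refine ⟨a * b, ?_⟩
  rw [← ha, ← hb]
  simp only [Units.smul_def, Units.val_mul]
  rw [wm_smul_left, wm_smul_right]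
  exact (smul_smul (a : F) (b : F) _).symm

lemma external_gP {A B : Projectivization F (Fin 2 → F)} (h : A ≠ B) :
    External F (gP A B) := by
  rw [gP, dif_neg h, external_mk, Qc_wm]
  exact ⟨⟨wg A.rep B.rep, by ring⟩, pow_ne_zero _ (wg_rep_ne_zero h)⟩

lemma dq_gP_zero_iff (h2 : (2 : F) ≠ 0) {A B C D : Projectivization F (Fin 2 → F)}
    (hAB : A ≠ B) (hCD : C ≠ D) :
    Dq (gP A B).rep (gP C D).rep = 0 ↔ (A = C ∨ A = D ∨ B = C ∨ B = D) := by
  rw [gP, dif_neg hAB, gP, dif_neg hCD, dq_rep_zero_iff, Dq_wm]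
  have h16 : (16 : F) ≠ 0 := by
    have := pow_ne_zero 4 h2
    norm_num at this
    exact this
  rw [mul_eq_zero, mul_eq_zero, mul_eq_zero, mul_eq_zero]
  simp only [h16, false_or, ← eq_iff_wg, or_assoc]

lemma bp_cn_gP (h2 : (2 : F) ≠ 0) {A B Z : Projectivization F (Fin 2 → F)} (hAB : A ≠ B) :
    Bp (gP A B).rep (cn Z.rep) = 0 ↔ (A = Z ∨ B = Z) := by
  rw [gP, dif_neg hAB]
  obtain ⟨a, ha⟩ := Projectivization.exists_smul_eq_mk_rep F (wm A.rep B.rep)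
    (wm_ne_zero (wg_rep_ne_zero hAB))
  rw [← ha, Units.smul_def, Bp_smul_left, Bp_wm_cn]
  have hn2 : (-2 : F) ≠ 0 := neg_ne_zero.mpr h2
  rw [mul_eq_zero, mul_eq_zero, mul_eq_zero]
  simp only [a.ne_zero, hn2, false_or, ← eq_iff_wg]

lemma gP_inj (h2 : (2 : F) ≠ 0) {A B C D : Projectivization F (Fin 2 → F)}
    (hAB : A ≠ B) (hCD : C ≠ D) (h : gP A B = gP C D) :
    s(A, B) = s(C, D) := by
  have hA : C = A ∨ D = A := by
    have := (bp_cn_gP h2 hCD (Z := A)).mp (by rw [← h]; exact (bp_cn_gP h2 hAB).mpr (Or.inl rfl))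
    exact this
  have hB : C = B ∨ D = B := by
    have := (bp_cn_gP h2 hCD (Z := B)).mp (by rw [← h]; exact (bp_cn_gP h2 hAB).mpr (Or.inr rfl))
    exact this
  rw [Sym2.eq_iff]
  rcases hA with h1 | h1 <;> rcases hB with h2' | h2'
  · exact absurd (h1.symm.trans h2') hAB
  · exact Or.inl ⟨h1.symm, h2'.symm⟩
  · exact Or.inr ⟨h1.symm, h2'.symm⟩
  · exact absurd (h1.symm.trans h2') hAB

lemma gP_surj (h2 : (2 : F) ≠ 0) {S : Projectivization F (Fin 3 → F)} (hS : External F S) :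
    ∃ A B : Projectivization F (Fin 2 → F), A ≠ B ∧ gP A B = S := by
  obtain ⟨⟨c, hc⟩, hne⟩ := hS
  have hc0 : c ≠ 0 := fun h => hne (by rw [hc, h, mul_zero])
  by_cases h0 : S.rep 0 = 0
  · -- pair {∞-ish}
    have hs1 : S.rep 1 ≠ 0 := by
      intro h1
      apply hne
      simp [Qc, h0, h1]
    set x : Fin 2 → F := ![0, 1] with hxdef
    set y : Fin 2 → F := ![2 * S.rep 1, S.rep 2] with hydef
    have hx : x ≠ 0 := by
      intro h; have := congrFun h 1; simp [hxdef] at this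
    have hy : y ≠ 0 := by
      intro h; have := congrFun h 0; simp [hydef] at this
      rcases this with h | h
      · exact h2 h
      · exact hs1 h
    have hwg : wg x y ≠ 0 := by
      simp only [wg, hxdef, hydef, Matrix.cons_val_zero, Matrix.cons_val_one, Matrix.head_cons]
      intro h
      apply hs1
      have : -(2 * S.rep 1) = 0 := by linear_combination h
      rcases mul_eq_zero.mp (neg_eq_zero.mp this) with h' | h'
      · exact absurd h' h2
      · exact h'
    refine ⟨Projectivization.mk F x hx, Projectivization.mk F y hy, ?_, ?_⟩
    · rw [Ne, mk_eq_mk_iff_wg]; exact hwg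
    · rw [gP_eq (by rw [Ne, mk_eq_mk_iff_wg]; exact hwg) hx hy rfl rfl (wm_ne_zero hwg)]
      have hkey : wm x y = (2 : F) • S.rep := by
        funext i
        fin_cases i <;>
          simp [wm, hxdef, hydef, Pi.smul_apply, smul_eq_mul, h0] <;> ring
      have hfin : Projectivization.mk F (wm x y) (wm_ne_zero hwg) =
          Projectivization.mk F S.rep (rep_nonzero S) := by
        rw [mk_eq_mk_iff]
        exact ⟨Units.mk0 2 h2, by rw [Units.smul_def, Units.val_mk0, ← hkey]⟩
      rw [hfin, Projectivization.mk_rep]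
  · set x : Fin 2 → F := ![S.rep 0, S.rep 1 - c] with hxdef
    set y : Fin 2 → F := ![S.rep 0, S.rep 1 + c] with hydef
    have hx : x ≠ 0 := by
      intro h; have := congrFun h 0; simp [hxdef] at this; exact h0 this
    have hy : y ≠ 0 := by
      intro h; have := congrFun h 0; simp [hydef] at this; exact h0 this
    have hwg : wg x y ≠ 0 := by
      simp only [wg, hxdef, hydef, Matrix.cons_val_zero, Matrix.cons_val_one, Matrix.head_cons]
      have : S.rep 0 * (S.rep 1 + c) - (S.rep 1 - c) * S.rep 0 = S.rep 0 * (2 * c) := by ring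
      rw [this]
      exact mul_ne_zero h0 (mul_ne_zero h2 hc0)
    refine ⟨Projectivization.mk F x hx, Projectivization.mk F y hy, ?_, ?_⟩
    · rw [Ne, mk_eq_mk_iff_wg]; exact hwg
    · rw [gP_eq (by rw [Ne, mk_eq_mk_iff_wg]; exact hwg) hx hy rfl rfl (wm_ne_zero hwg)]
      have hQ : S.rep 1 ^ 2 - S.rep 0 * S.rep 2 = c * c := hc
      have hkey : wm x y = (2 * S.rep 0) • S.rep := by
        funext i
        fin_cases i <;>
          simp [wm, hxdef, hydef, Pi.smul_apply, smul_eq_mul]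
        · ring
        · linear_combination 2 * hQ
      have hfin : Projectivization.mk F (wm x y) (wm_ne_zero hwg) =
          Projectivization.mk F S.rep (rep_nonzero S) := by
        rw [mk_eq_mk_iff]
        exact ⟨Units.mk0 (2 * S.rep 0) (mul_ne_zero h2 h0),
          by rw [Units.smul_def, Units.val_mk0, ← hkey]⟩
      rw [hfin, Projectivization.mk_rep]

lemma card_P1 [Fintype F] : Nat.card (Projectivization F (Fin 2 → F)) = Fintype.card F + 1 := by
  have h1 : ∀ a : F, (![1, a] : Fin 2 → F) ≠ 0 := by
    intro a h; have := congrFun h 0; simp at this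
  have h01 : (![0, 1] : Fin 2 → F) ≠ 0 := by
    intro h; have := congrFun h 1; simp at this
  let f : F ⊕ Unit → Projectivization F (Fin 2 → F) :=
    Sum.elim (fun a => Projectivization.mk F ![1, a] (h1 a))
      (fun _ => Projectivization.mk F ![0, 1] h01)
  have hbij : Function.Bijective f := by
    constructor
    · rintro (a | u) (b | v) h <;> simp only [f, Sum.elim_inl, Sum.elim_inr] at h
      · rw [mk_eq_mk_iff_wg] at h
        simp only [wg, Matrix.cons_val_zero, Matrix.cons_val_one, Matrix.head_cons,
          one_mul, mul_one] at h
        rw [sub_eq_zero] at h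
        simp [h]
      · rw [mk_eq_mk_iff_wg] at h
        simp [wg] at h
      · rw [mk_eq_mk_iff_wg] at h
        simp [wg] at h
      · rfl
    · intro X
      by_cases h0 : X.rep 0 = 0
      · refine ⟨Sum.inr Unit.unit, ?_⟩
        simp only [f, Sum.elim_inr]
        rw [← Projectivization.mk_rep X, mk_eq_mk_iff_wg]
        simp [wg, h0]
      · refine ⟨Sum.inl (X.rep 1 / X.rep 0), ?_⟩
        simp only [f, Sum.elim_inl]
        rw [← Projectivization.mk_rep X, mk_eq_mk_iff_wg]
        simp only [wg, Matrix.cons_val_zero, Matrix.cons_val_one, Matrix.head_cons, one_mul,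
          mul_one]
        simp only [Projectivization.mk_rep]
        field_simp
        ring
  rw [← Nat.card_eq_of_bijective f hbij, Nat.card_sum, Nat.card_eq_fintype_card]
  simp

section Counting
variable {α : Type} [Fintype α] [DecidableEq α]

lemma sym2_eq_of_mem {A B : α} (hAB : A ≠ B) {z : Sym2 α} (hA : A ∈ z) (hB : B ∈ z) :
    z = s(A, B) := by
  induction z using Sym2.ind with
  | _ x y =>
    rw [Sym2.mem_iff] at hA hB
    rw [Sym2.eq_iff]
    rcases hA with h1 | h1 <;> rcases hB with h2 | h2
    · exact absurd (h1.trans h2.symm) hAB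
    · exact Or.inl ⟨h1.symm, h2.symm⟩
    · exact Or.inr ⟨h2.symm, h1.symm⟩
    · exact absurd (h1.trans h2.symm) hAB

def memEquiv (A : α) : {z : Sym2 α // ¬z.IsDiag ∧ A ∈ z} ≃ {C : α // C ≠ A} where
  toFun z := ⟨Sym2.Mem.other' z.2.2, fun h => z.2.1 (by
    rw [← Sym2.other_spec' z.2.2, h]
    exact Sym2.mk_isDiag_iff.mpr rfl)⟩
  invFun C := ⟨s(A, C.1), fun hd => C.2 (Sym2.mk_isDiag_iff.mp hd).symm,
    by rw [Sym2.mem_iff]; exact Or.inl rfl⟩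
  left_inv z := Subtype.ext (Sym2.other_spec' z.2.2)
  right_inv C := Subtype.ext (by
    have h := Sym2.other_spec' (((Sym2.mem_iff).mpr (Or.inl rfl)) :
      A ∈ s(A, C.1))
    exact Sym2.congr_right.mp h)

lemma card_mem_subtype (A : α) :
    Nat.card {z : Sym2 α // ¬z.IsDiag ∧ A ∈ z} = Fintype.card α - 1 := by
  rw [Nat.card_congr (memEquiv A), Nat.card_eq_fintype_card]
  rw [Fintype.card_subtype]
  rw [show Finset.univ.filter (fun C => C ≠ A) = Finset.univ.erase A from Finset.filter_ne' _ _]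
  rw [Finset.card_erase_of_mem (Finset.mem_univ A), Finset.card_univ]

lemma nat_card_filter (p : Sym2 α → Prop) [DecidablePred p] :
    Nat.card {z : Sym2 α // p z} = (Finset.univ.filter p).card := by
  rw [Nat.card_eq_fintype_card, Fintype.card_subtype]

lemma card_pair_filter {A B : α} (hAB : A ≠ B) :
    Nat.card {z : Sym2 α // ¬z.IsDiag ∧ (A ∈ z ∨ B ∈ z)} = 2 * Fintype.card α - 3 := by
  classical
  rw [nat_card_filter]
  have hsplit : Finset.univ.filter (fun z : Sym2 α => ¬z.IsDiag ∧ (A ∈ z ∨ B ∈ z)) =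
      (Finset.univ.filter fun z : Sym2 α => ¬z.IsDiag ∧ A ∈ z) ∪
      (Finset.univ.filter fun z : Sym2 α => ¬z.IsDiag ∧ B ∈ z) := by
    ext z
    simp only [Finset.mem_filter, Finset.mem_union, Finset.mem_univ, true_and]
    tauto
  have hinter : (Finset.univ.filter fun z : Sym2 α => ¬z.IsDiag ∧ A ∈ z) ∩
      (Finset.univ.filter fun z : Sym2 α => ¬z.IsDiag ∧ B ∈ z) = {s(A, B)} := by
    ext z
    simp only [Finset.mem_inter, Finset.mem_filter, Finset.mem_univ, true_and,
      Finset.mem_singleton]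
    constructor
    · rintro ⟨⟨_, hA⟩, ⟨_, hB⟩⟩
      exact sym2_eq_of_mem hAB hA hB
    · rintro rfl
      refine ⟨⟨?_, ?_⟩, ?_, ?_⟩
      · rw [Sym2.mk_isDiag_iff]; exact hAB
      · rw [Sym2.mem_iff]; exact Or.inl rfl
      · rw [Sym2.mk_isDiag_iff]; exact hAB
      · rw [Sym2.mem_iff]; exact Or.inr rfl
  have hcard := Finset.card_union_add_card_inter
    (Finset.univ.filter fun z : Sym2 α => ¬z.IsDiag ∧ A ∈ z)
    (Finset.univ.filter fun z : Sym2 α => ¬z.IsDiag ∧ B ∈ z)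
  rw [hinter, Finset.card_singleton] at hcard
  have hA := card_mem_subtype A
  have hB := card_mem_subtype B
  rw [nat_card_filter] at hA hB
  have hN : 2 ≤ Fintype.card α := Fintype.one_lt_card_iff_nontrivial.mpr ⟨⟨A, B, hAB⟩⟩
  rw [hsplit]
  omega

lemma card_shared_filter {A B G : α} (hAB : A ≠ B) (hBG : B ≠ G) (hAG : A ≠ G) :
    Nat.card {z : Sym2 α // ¬z.IsDiag ∧ (A ∈ z ∨ B ∈ z) ∧ (G ∈ z ∨ B ∈ z)} =
      Fintype.card α := by
  classical
  rw [nat_card_filter]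
  have hsplit : Finset.univ.filter
      (fun z : Sym2 α => ¬z.IsDiag ∧ (A ∈ z ∨ B ∈ z) ∧ (G ∈ z ∨ B ∈ z)) =
      (Finset.univ.filter fun z : Sym2 α => ¬z.IsDiag ∧ B ∈ z) ∪ {s(A, G)} := by
    ext z
    simp only [Finset.mem_filter, Finset.mem_union, Finset.mem_univ, true_and,
      Finset.mem_singleton]
    constructor
    · rintro ⟨hd, hA | hB', hG | hB'⟩
      · exact Or.inr (sym2_eq_of_mem hAG hA hG)
      · exact Or.inl ⟨hd, hB'⟩
      · exact Or.inl ⟨hd, hB'⟩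
      · exact Or.inl ⟨hd, hB'⟩
    · rintro (⟨hd, hB'⟩ | rfl)
      · exact ⟨hd, Or.inr hB', Or.inr hB'⟩
      · refine ⟨?_, Or.inl ?_, Or.inl ?_⟩
        · rw [Sym2.mk_isDiag_iff]; exact hAG
        · rw [Sym2.mem_iff]; exact Or.inl rfl
        · rw [Sym2.mem_iff]; exact Or.inr rfl
  have hdisj : Disjoint (Finset.univ.filter fun z : Sym2 α => ¬z.IsDiag ∧ B ∈ z)
      ({s(A, G)} : Finset (Sym2 α)) := by
    rw [Finset.disjoint_singleton_right, Finset.mem_filter]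
    rintro ⟨-, -, hB'⟩
    rw [Sym2.mem_iff] at hB'
    rcases hB' with h | h
    · exact hAB.symm h
    · exact hBG h
  rw [hsplit, Finset.card_union_of_disjoint hdisj, Finset.card_singleton]
  have hA := card_mem_subtype B
  rw [nat_card_filter] at hA
  have hN : 1 ≤ Fintype.card α := Fintype.card_pos_iff.mpr ⟨A⟩
  omega

lemma card_disjoint_filter {A B G D : α} (hAB : A ≠ B) (hGD : G ≠ D) (hAG : A ≠ G)
    (hAD : A ≠ D) (hBG : B ≠ G) (hBD : B ≠ D) :
    Nat.card {z : Sym2 α // ¬z.IsDiag ∧ (A ∈ z ∨ B ∈ z) ∧ (G ∈ z ∨ D ∈ z)} = 4 := by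
  classical
  rw [nat_card_filter]
  have hset : Finset.univ.filter
      (fun z : Sym2 α => ¬z.IsDiag ∧ (A ∈ z ∨ B ∈ z) ∧ (G ∈ z ∨ D ∈ z)) =
      {s(A, G), s(A, D), s(B, G), s(B, D)} := by
    ext z
    simp only [Finset.mem_filter, Finset.mem_univ, true_and, Finset.mem_insert,
      Finset.mem_singleton]
    constructor
    · rintro ⟨hd, h1 | h1, h2 | h2⟩
      · exact Or.inl (sym2_eq_of_mem hAG h1 h2)
      · exact Or.inr (Or.inl (sym2_eq_of_mem hAD h1 h2))
      · exact Or.inr (Or.inr (Or.inl (sym2_eq_of_mem hBG h1 h2)))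
      · exact Or.inr (Or.inr (Or.inr (sym2_eq_of_mem hBD h1 h2)))
    · rintro (rfl | rfl | rfl | rfl) <;>
        refine ⟨by rw [Sym2.mk_isDiag_iff]; assumption, ?_, ?_⟩ <;>
        simp [Sym2.mem_iff]
  rw [hset]
  have hs : ∀ x y : α, x ≠ y → ¬ y = x := fun x y h => fun h' => h h'.symm
  rw [Finset.card_insert_of_notMem (by
      simp [Sym2.eq_iff, hGD, hAB, hAD, hBG, hBD, hAG, hs _ _ hGD, hs _ _ hAB, hs _ _ hAD,
        hs _ _ hBG, hs _ _ hBD, hs _ _ hAG]),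
    Finset.card_insert_of_notMem (by
      simp [Sym2.eq_iff, hGD, hAB, hAD, hBG, hBD, hAG, hs _ _ hGD, hs _ _ hAB, hs _ _ hAD,
        hs _ _ hBG, hs _ _ hBD, hs _ _ hAG]),
    Finset.card_insert_of_notMem (by
      simp [Sym2.eq_iff, hGD, hAB, hAD, hBG, hBD, hAG, hs _ _ hGD, hs _ _ hAB, hs _ _ hAD,
        hs _ _ hBG, hs _ _ hBD, hs _ _ hAG]),
    Finset.card_singleton]

end Counting

noncomputable def gS : Sym2 (Projectivization F (Fin 2 → F)) → Projectivization F (Fin 3 → F) :=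
  Sym2.lift ⟨gP, gP_comm⟩

lemma gS_mk (A B : Projectivization F (Fin 2 → F)) : gS (s(A, B)) = gP A B :=
  Sym2.lift_mk _ _ _

lemma ne_of_not_isDiag {A B : Projectivization F (Fin 2 → F)}
    (h : ¬(s(A, B)).IsDiag) : A ≠ B := fun he => h (Sym2.mk_isDiag_iff.mpr he)

lemma external_gS {z : Sym2 (Projectivization F (Fin 2 → F))} (hz : ¬z.IsDiag) :
    External F (gS z) := by
  induction z using Sym2.ind with
  | _ A B => rw [gS_mk]; exact external_gP (ne_of_not_isDiag hz)

lemma dq_gS_zero_iff (h2 : (2 : F) ≠ 0) {A B : Projectivization F (Fin 2 → F)} (hAB : A ≠ B)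
    {z : Sym2 (Projectivization F (Fin 2 → F))} (hz : ¬z.IsDiag) :
    Dq (gP A B).rep (gS z).rep = 0 ↔ (A ∈ z ∨ B ∈ z) := by
  induction z using Sym2.ind with
  | _ C D =>
    rw [gS_mk, dq_gP_zero_iff h2 hAB (ne_of_not_isDiag hz)]
    simp only [Sym2.mem_iff]
    tauto

noncomputable def epsEquiv (h2 : (2 : F) ≠ 0) :
    {z : Sym2 (Projectivization F (Fin 2 → F)) // ¬z.IsDiag} ≃
      {P : Projectivization F (Fin 3 → F) // External F P} := by
  refine Equiv.ofBijective (fun z => ⟨gS z.1, external_gS z.2⟩) ⟨?_, ?_⟩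
  · rintro ⟨z, hz⟩ ⟨z', hz'⟩ h
    rw [Subtype.mk.injEq] at h ⊢
    induction z using Sym2.ind with
    | _ A B =>
      induction z' using Sym2.ind with
      | _ C D =>
        rw [gS_mk, gS_mk] at h
        exact gP_inj h2 (ne_of_not_isDiag hz) (ne_of_not_isDiag hz') h
  · rintro ⟨S, hS⟩
    obtain ⟨A, B, hAB, hg⟩ := gP_surj h2 hS
    exact ⟨⟨s(A, B), fun hd => hAB (Sym2.mk_isDiag_iff.mp hd)⟩,
      Subtype.ext (by show gS (s(A, B)) = S; rw [gS_mk]; exact hg)⟩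

lemma ind_pos {p : Prop} (h : p) : ind p = 1 := if_pos h

lemma ind_neg {p : Prop} (h : ¬p) : ind p = 0 := if_neg h

lemma ind_congr {p q : Prop} (h : p ↔ q) : ind p = ind q := by
  by_cases hp : p
  · rw [ind_pos hp, ind_pos (h.mp hp)]
  · rw [ind_neg hp, ind_neg (fun hq => hp (h.mpr hq))]

lemma ind_mul (p q : Prop) : ind p * ind q = ind (p ∧ q) := by
  by_cases hp : p <;> by_cases hq : q
  · rw [ind_pos hp, ind_pos hq, ind_pos ⟨hp, hq⟩, one_mul]
  · rw [ind_neg hq, mul_zero, ind_neg (show ¬(p ∧ q) from fun h => hq h.2)]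
  · rw [ind_neg hp, zero_mul, ind_neg (show ¬(p ∧ q) from fun h => hp h.1)]
  · rw [ind_neg hp, zero_mul, ind_neg (show ¬(p ∧ q) from fun h => hp h.1)]

lemma sum_ind {β : Type} [Fintype β] (p : β → Prop) :
    (∑ b : β, ind (p b)) = (Nat.card {b // p b} : ZMod 2) := by
  classical
  rw [Nat.card_eq_fintype_card, Fintype.card_subtype, Finset.card_filter]
  push_cast
  refine Finset.sum_congr rfl fun b _ => ?_
  by_cases h : p b
  · rw [ind_pos h, if_pos h]
  · rw [ind_neg h, if_neg h]

lemma cast_even {n : ℕ} (h : n % 2 = 0) : (n : ZMod 2) = 0 := by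
  conv_lhs => rw [← Nat.mod_add_div n 2]
  push_cast
  rw [h]
  rw [show ((2 : ZMod 2)) = 0 from rfl]
  push_cast
  ring

lemma cast_odd {n : ℕ} (h : n % 2 = 1) : (n : ZMod 2) = 1 := by
  conv_lhs => rw [← Nat.mod_add_div n 2]
  push_cast
  rw [h]
  rw [show ((2 : ZMod 2)) = 0 from rfl]
  push_cast
  ring

end Aux

/-- For `q ≡ 3 (mod 4)`, the square of `M1` (whose entries are
`|NE(Pᵢ) ∩ NE(Pⱼ)| mod 2`) equals the identity over `F₂`. -/
theorem stmt13 (F : Type) [Field F] [Fintype F] (q : ℕ)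
    (hq : Fintype.card F = q) (hodd : Odd q) (h4 : q % 4 = 3)
    [Fintype {P : Projectivization F (Fin 3 → F) // External F P}]
    [DecidableEq {P : Projectivization F (Fin 3 → F) // External F P}] :
    M1 F ^ 2 = 1 := by
  classical
  have h2 : (2 : F) ≠ 0 := Aux.two_ne_zero'' hq hodd
  have hq2 : q % 2 = 1 := Nat.odd_iff.mp hodd
  haveI hfin1 : Finite (Projectivization F (Fin 2 → F)) := Quotient.finite _
  haveI : Fintype (Projectivization F (Fin 2 → F)) := Fintype.ofFinite _
  have hN : Fintype.card (Projectivization F (Fin 2 → F)) = q + 1 := by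
    rw [← Nat.card_eq_fintype_card, Aux.card_P1, hq]
  have hEdef : True := trivial
  let eps := Aux.epsEquiv (F := F) h2
  have heps : ∀ z, (eps z).1 = Aux.gS z.1 := fun z => rfl
  -- counting fact: row sums of the D-indicator are odd
  have hcount1 : ∀ X : {P : Projectivization F (Fin 3 → F) // External F P}, (∑ S : {P : Projectivization F (Fin 3 → F) // External F P}, ind (Aux.Dq X.1.rep S.1.rep = 0)) = 1 := by
    intro X
    obtain ⟨A, B, hAB, hg⟩ := Aux.gP_surj h2 X.2
    rw [Aux.sum_ind]
    have he : Nat.card {S : {P : Projectivization F (Fin 3 → F) // External F P} // Aux.Dq X.1.rep S.1.rep = 0} =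
        Nat.card {z : Sym2 (Projectivization F (Fin 2 → F)) //
          ¬z.IsDiag ∧ (A ∈ z ∨ B ∈ z)} := by
      refine Nat.card_congr (Equiv.trans ?_ (Equiv.subtypeSubtypeEquivSubtypeInter _ _))
      refine (Equiv.subtypeEquiv eps fun z => ?_).symm
      rw [heps, ← hg]
      exact (Aux.dq_gS_zero_iff h2 hAB z.2).symm
    rw [he, Aux.card_pair_filter hAB, hN]
    exact Aux.cast_odd (by omega)
  -- total count is even
  have hcountE : (∑ _S : {P : Projectivization F (Fin 3 → F) // External F P}, (1 : ZMod 2)) = 0 := by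
    rw [Finset.sum_const, Finset.card_univ, nsmul_eq_mul, mul_one]
    have hcE : Fintype.card {P : Projectivization F (Fin 3 → F) // External F P} = (q + 1).choose 2 := by
      rw [← Nat.card_eq_fintype_card, ← Nat.card_congr eps, Nat.card_eq_fintype_card,
        Sym2.card_subtype_not_diag, hN]
    obtain ⟨m, hm⟩ : ∃ m, q + 1 = 4 * m := ⟨(q + 1) / 4, by omega⟩
    have hprod : (q + 1) * q = 2 * (2 * m * q) := by rw [hm]; ring
    have hch : (q + 1).choose 2 % 2 = 0 := by
      rw [Nat.choose_two_right, Nat.add_sub_cancel, hprod,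
        Nat.mul_div_cancel_left _ (by norm_num : 0 < 2), mul_assoc]
      exact Nat.mul_mod_right 2 _
    rw [hcE]
    exact Aux.cast_even hch
  -- cross-count is even for distinct points
  have hcount2 : ∀ P R : {P : Projectivization F (Fin 3 → F) // External F P}, P ≠ R →
      (∑ S : {P : Projectivization F (Fin 3 → F) // External F P}, ind (Aux.Dq P.1.rep S.1.rep = 0 ∧ Aux.Dq R.1.rep S.1.rep = 0)) = 0 := by
    intro P R hPR
    obtain ⟨A, B, hAB, hgP⟩ := Aux.gP_surj h2 P.2
    obtain ⟨G, D, hGD, hgR⟩ := Aux.gP_surj h2 R.2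
    have hzz : s(A, B) ≠ s(G, D) := by
      intro h
      apply hPR
      apply Subtype.ext
      rw [← hgP, ← hgR, ← Aux.gS_mk, ← Aux.gS_mk, h]
    rw [Aux.sum_ind]
    have he : Nat.card {S : {P : Projectivization F (Fin 3 → F) // External F P} // Aux.Dq P.1.rep S.1.rep = 0 ∧ Aux.Dq R.1.rep S.1.rep = 0} =
        Nat.card {z : Sym2 (Projectivization F (Fin 2 → F)) //
          ¬z.IsDiag ∧ (A ∈ z ∨ B ∈ z) ∧ (G ∈ z ∨ D ∈ z)} := by
      refine Nat.card_congr (Equiv.trans ?_ (Equiv.subtypeSubtypeEquivSubtypeInter _ _))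
      refine (Equiv.subtypeEquiv eps fun z => ?_).symm
      rw [heps, ← hgP, ← hgR]
      exact (and_congr (Aux.dq_gS_zero_iff h2 hAB z.2) (Aux.dq_gS_zero_iff h2 hGD z.2)).symm
    rw [he]
    by_cases hAG : A = G
    · subst hAG
      have hBD : B ≠ D := fun h => hzz (by rw [h])
      have hre : Nat.card {z : Sym2 (Projectivization F (Fin 2 → F)) //
          ¬z.IsDiag ∧ (A ∈ z ∨ B ∈ z) ∧ (A ∈ z ∨ D ∈ z)} =
          Nat.card {z : Sym2 (Projectivization F (Fin 2 → F)) //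
          ¬z.IsDiag ∧ (B ∈ z ∨ A ∈ z) ∧ (D ∈ z ∨ A ∈ z)} :=
        Nat.card_congr (Equiv.subtypeEquivRight fun z => by tauto)
      rw [hre, Aux.card_shared_filter hAB.symm hGD hBD, hN]
      exact Aux.cast_even (by omega)
    · by_cases hAD : A = D
      · subst hAD
        have hBG : B ≠ G := by
          intro h
          apply hzz
          rw [h]
          exact Sym2.eq_swap
        have hre : Nat.card {z : Sym2 (Projectivization F (Fin 2 → F)) //
            ¬z.IsDiag ∧ (A ∈ z ∨ B ∈ z) ∧ (G ∈ z ∨ A ∈ z)} =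
            Nat.card {z : Sym2 (Projectivization F (Fin 2 → F)) //
            ¬z.IsDiag ∧ (B ∈ z ∨ A ∈ z) ∧ (G ∈ z ∨ A ∈ z)} :=
          Nat.card_congr (Equiv.subtypeEquivRight fun z => by tauto)
        rw [hre, Aux.card_shared_filter hAB.symm (fun h => hGD h.symm) hBG, hN]
        exact Aux.cast_even (by omega)
      · by_cases hBG : B = G
        · subst hBG
          have hre : Nat.card {z : Sym2 (Projectivization F (Fin 2 → F)) //
              ¬z.IsDiag ∧ (A ∈ z ∨ B ∈ z) ∧ (B ∈ z ∨ D ∈ z)} =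
              Nat.card {z : Sym2 (Projectivization F (Fin 2 → F)) //
              ¬z.IsDiag ∧ (A ∈ z ∨ B ∈ z) ∧ (D ∈ z ∨ B ∈ z)} :=
            Nat.card_congr (Equiv.subtypeEquivRight fun z => by tauto)
          rw [hre, Aux.card_shared_filter hAB hGD hAD, hN]
          exact Aux.cast_even (by omega)
        · by_cases hBD : B = D
          · subst hBD
            have hre : Nat.card {z : Sym2 (Projectivization F (Fin 2 → F)) //
                ¬z.IsDiag ∧ (A ∈ z ∨ B ∈ z) ∧ (G ∈ z ∨ B ∈ z)} =
                Nat.card {z : Sym2 (Projectivization F (Fin 2 → F)) //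
                ¬z.IsDiag ∧ (A ∈ z ∨ B ∈ z) ∧ (G ∈ z ∨ B ∈ z)} := rfl
            rw [hre, Aux.card_shared_filter hAB (fun h => hGD h.symm) hAG, hN]
            exact Aux.cast_even (by omega)
          · rw [Aux.card_disjoint_filter hAB hGD hAG hAD hBG hBD]
            exact Aux.cast_even (by omega)
  -- assemble
  ext P R
  rw [pow_two, Matrix.mul_apply, Matrix.one_apply]
  have hentry : ∀ X Y : {P : Projectivization F (Fin 3 → F) // External F P}, (M1 F) X Y = 1 + ind (Aux.Dq X.1.rep Y.1.rep = 0) := by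
    intro X Y
    show ind (Y.1 ∈ NE F X.1) = _
    by_cases hD : Aux.Dq X.1.rep Y.1.rep = 0
    · rw [Aux.ind_neg (fun hmem => ((Aux.mem_NE_iff h2 X.2 Y.1).mp hmem).2 hD), Aux.ind_pos hD]
      decide
    · rw [Aux.ind_pos ((Aux.mem_NE_iff h2 X.2 Y.1).mpr ⟨Y.2, hD⟩), Aux.ind_neg hD, add_zero]
  have hexp : ∀ S : {P : Projectivization F (Fin 3 → F) // External F P}, (M1 F) P S * (M1 F) S R =
      1 + ind (Aux.Dq P.1.rep S.1.rep = 0) + ind (Aux.Dq R.1.rep S.1.rep = 0) +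
        ind (Aux.Dq P.1.rep S.1.rep = 0) * ind (Aux.Dq R.1.rep S.1.rep = 0) := by
    intro S
    rw [hentry P S, hentry S R,
      Aux.ind_congr (show (Aux.Dq S.1.rep R.1.rep = 0) ↔ (Aux.Dq R.1.rep S.1.rep = 0) by
        rw [Aux.Dq_comm])]
    ring
  rw [Finset.sum_congr rfl fun S _ => hexp S]
  rw [Finset.sum_add_distrib, Finset.sum_add_distrib, Finset.sum_add_distrib]
  rw [hcountE, hcount1 P, hcount1 R]
  have hprodind : (∑ S : {P : Projectivization F (Fin 3 → F) // External F P}, ind (Aux.Dq P.1.rep S.1.rep = 0) * ind (Aux.Dq R.1.rep S.1.rep = 0))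
      = ∑ S : {P : Projectivization F (Fin 3 → F) // External F P}, ind (Aux.Dq P.1.rep S.1.rep = 0 ∧ Aux.Dq R.1.rep S.1.rep = 0) :=
    Finset.sum_congr rfl fun S _ => Aux.ind_mul _ _
  rw [hprodind]
  by_cases hPR : P = R
  · subst hPR
    rw [if_pos rfl]
    have : (∑ S : {P : Projectivization F (Fin 3 → F) // External F P}, ind (Aux.Dq P.1.rep S.1.rep = 0 ∧ Aux.Dq P.1.rep S.1.rep = 0)) =
        ∑ S : {P : Projectivization F (Fin 3 → F) // External F P}, ind (Aux.Dq P.1.rep S.1.rep = 0) :=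
      Finset.sum_congr rfl fun S _ => Aux.ind_congr (by tauto)
    rw [this, hcount1 P]
    decide
  · rw [if_neg hPR, hcount2 P R hPR]
    decide
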